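/- arXiv:1103.2417 — 4 statements merged into one kernel-verified Lean document; each statement's English description precedes it below -/
import Mathlib

section
/- Let f be a polynomial with integer coefficients such that f(1) = 1 or f(1) = -1. Let p be a prime number, let a be a nonnegative integer, and let ζ be a primitive (p^a)-th root of unity in the complex numbers. Then f(ζ) ≠ 0. -/
/-- If `f : ℤ[t]` satisfies `f(1) = ±1`, `p` is prime, and `ζ ∈ ℂ` is a primitive
`p^a`-th root of unity, then `f(ζ) ≠ 0`. -/
theorem stmt_0 (f : Polynomial ℤ) (hf : f.eval 1 = 1 ∨ f.eval 1 = -1)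
    (p : ℕ) (hp : p.Prime) (a : ℕ) (ζ : ℂ) (hζ : IsPrimitiveRoot ζ (p ^ a)) :
    Polynomial.aeval ζ f ≠ 0 := by
  haveI : Fact p.Prime := ⟨hp⟩
  intro h0
  cases a with
  | zero =>
    simp only [pow_zero] at hζ
    have hζ1 : ζ = 1 := by simpa using hζ.pow_eq_one
    subst hζ1
    have : ((f.eval 1 : ℤ) : ℂ) = 0 := by
      rw [show ((1:ℂ)) = algebraMap ℤ ℂ 1 by simp,
        Polynomial.aeval_algebraMap_apply_eq_algebraMap_eval] at h0
      simpa using h0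
    rcases hf with hf | hf <;> rw [hf] at this <;> norm_num at this
  | succ k =>
    have hpos : 0 < p ^ (k + 1) := pow_pos hp.pos _
    have hmin := Polynomial.cyclotomic_eq_minpoly hζ hpos
    have hint : IsIntegral ℤ ζ := hζ.isIntegral hpos
    have hdvd : minpoly ℤ ζ ∣ f := minpoly.isIntegrallyClosed_dvd hint h0
    rw [← hmin] at hdvd
    have := Polynomial.eval_dvd (x := (1 : ℤ)) hdvd
    rw [Polynomial.eval_one_cyclotomic_prime_pow] at this
    rcases hf with hf | hf <;> rw [hf] at this
    · exact hp.one_lt.ne' (Int.ofNat_inj.mp (Int.eq_one_of_dvd_one (by positivity) this))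
    · rw [Int.dvd_neg] at this
      exact hp.one_lt.ne' (Int.ofNat_inj.mp (Int.eq_one_of_dvd_one (by positivity) this))
end

section
/- Let f be a polynomial with integer coefficients such that f(1) = 1 or f(1) = -1, let p be a prime, let a be a nonnegative integer, and set d = p^a. Then the integer n satisfying n = Π_d(f) = ∏_{k=0}^{d-1} f(e^{2πik/d}) is nonzero and is not divisible by p. In particular, for d a prime power, ℛ_d(f) = |Π_d(f)| is a positive integer. -/
open Polynomial Finset Complex

set_option synthInstance.maxHeartbeats 1000000
set_option maxHeartbeats 1600000

private lemma dvd_prod_sub_prod' {R : Type*} [CommRing R] {c : R} {s : Finset ℕ}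
    {A B : ℕ → R} (h : ∀ i ∈ s, c ∣ A i - B i) :
    c ∣ (∏ i ∈ s, A i) - ∏ i ∈ s, B i := by
  classical
  induction s using Finset.induction_on with
  | empty => simp
  | @insert x t hx ih =>
    rw [Finset.prod_insert hx, Finset.prod_insert hx]
    have h1 := h _ (Finset.mem_insert_self x t)
    have h2 := ih fun i hi => h i (Finset.mem_insert_of_mem hi)
    have key : A x * ∏ i ∈ t, A i - B x * ∏ i ∈ t, B i
        = (A x - B x) * ∏ i ∈ t, A i + B x * ((∏ i ∈ t, A i) - ∏ i ∈ t, B i) := by ring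
    rw [key]
    exact dvd_add (h1.mul_right _) (h2.mul_left _)

private lemma prod_dvd_pow_card' {R : Type*} [CommMonoid R] {ι : Type*} {s : Finset ι}
    {g : ι → R} {m : R} (h : ∀ i ∈ s, g i ∣ m) : (∏ i ∈ s, g i) ∣ m ^ s.card := by
  classical
  induction s using Finset.induction_on with
  | empty => simp
  | @insert x t hx ih =>
    rw [Finset.prod_insert hx, Finset.card_insert_of_notMem hx, pow_succ']
    exact mul_dvd_mul (h x (Finset.mem_insert_self x t))
      (ih fun i hi => h i (Finset.mem_insert_of_mem hi))

/-- If `f : ℤ[t]` satisfies `f(1) = ±1` and `d = p^a` is a prime power, then the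
integer `n` equal to `∏_{k=0}^{d-1} f(e^{2πik/d})` is nonzero and not divisible by `p`.
In particular `|Π_d(f)|` is a positive integer. -/
theorem stmt_2 (f : Polynomial ℤ) (hf : f.eval 1 = 1 ∨ f.eval 1 = -1)
    (p : ℕ) (hp : p.Prime) (a : ℕ) (d : ℕ) (hd : d = p ^ a) (n : ℤ)
    (hn : (∏ k ∈ Finset.range d,
        Polynomial.aeval (Complex.exp (2 * Real.pi * Complex.I * k / d)) f) = (n : ℂ)) :
    n ≠ 0 ∧ ¬ ((p : ℤ) ∣ n) := by
  haveI : Fact p.Prime := ⟨hp⟩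
  have hpZ : Prime (p : ℤ) := Nat.prime_iff_prime_int.1 hp
  set ε : ℤ := f.eval 1 with hε
  have hεunit : IsUnit ε := by rcases hf with h | h <;> simp [h]
  -- main claim: p does not divide n
  have hnd : ¬ ((p : ℤ) ∣ n) := by
    rcases Nat.eq_zero_or_pos a with ha | ha
    · -- d = 1 case
      subst ha
      rw [pow_zero] at hd
      subst hd
      rw [Finset.range_one, Finset.prod_singleton] at hn
      have h1 : (2 * (Real.pi : ℂ) * Complex.I * (0 : ℕ) / (1 : ℕ)) = 0 := by
        push_cast; ring
      rw [h1, Complex.exp_zero] at hn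
      have h2 : (Polynomial.aeval (1 : ℂ)) f = ((ε : ℤ) : ℂ) := by
        rw [Polynomial.aeval_def, Polynomial.eval₂_at_one]; rfl
      rw [h2] at hn
      have hεn : ε = n := by exact_mod_cast hn
      intro hdvd
      exact hpZ.not_unit (isUnit_of_dvd_unit hdvd (hεn ▸ hεunit))
    · -- d = p ^ a with a ≥ 1
      obtain ⟨b, rfl⟩ : ∃ b, a = b + 1 := ⟨a - 1, (Nat.succ_pred_eq_of_pos ha).symm⟩
      have hd0 : d ≠ 0 := hd ▸ (pow_ne_zero _ hp.pos.ne')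
      have hdpos : 0 < d := Nat.pos_of_ne_zero hd0
      set ζ : ℂ := Complex.exp (2 * Real.pi * Complex.I / d) with hζdef
      have hζ : IsPrimitiveRoot ζ d := Complex.isPrimitiveRoot_exp d hd0
      have hexp : ∀ k : ℕ, Complex.exp (2 * (Real.pi : ℂ) * Complex.I * k / d) = ζ ^ k := by
        intro k
        rw [show (2 * (Real.pi : ℂ) * Complex.I * k / d)
            = k * (2 * (Real.pi : ℂ) * Complex.I / d) by ring, Complex.exp_nat_mul]
      simp only [hexp] at hn
      -- work in the ring of algebraic integers
      set R := integralClosure ℤ ℂ with hR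
      have hint : ∀ x : ℂ, x ^ d = 1 → IsIntegral ℤ x := by
        intro x hx
        refine ⟨X ^ d - 1, ?_, ?_⟩
        · simpa using Polynomial.monic_X_pow_sub_C (1 : ℤ) hd0
        · simp [hx]
      set zR : R := ⟨ζ, hint ζ hζ.pow_eq_one⟩ with hzR
      set εR : R := algebraMap ℤ R ε with hεR
      set nR : R := ∏ k ∈ Finset.range d, Polynomial.aeval (zR ^ k) f with hnR
      have hcoe : algebraMap R ℂ nR = (n : ℂ) := by
        rw [hnR, map_prod, ← hn]
        refine Finset.prod_congr rfl fun k _ => ?_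
        have hz : (IsScalarTower.toAlgHom ℤ R ℂ) (zR ^ k) = ζ ^ k := by
          rw [map_pow]; rfl
        rw [show algebraMap R ℂ ((Polynomial.aeval (zR ^ k)) f)
            = (IsScalarTower.toAlgHom ℤ R ℂ) ((Polynomial.aeval (zR ^ k)) f) from rfl,
          ← Polynomial.aeval_algHom_apply, hz]
      have hμint : ∀ μ ∈ primitiveRoots d ℂ, IsIntegral ℤ μ := fun μ hμ =>
        hint μ ((mem_primitiveRoots hdpos).1 hμ).pow_eq_one
      set c : ℕ := (primitiveRoots d ℂ).card with hc
      have hc0 : c ≠ 0 := by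
        rw [hc]
        exact Finset.card_ne_zero_of_mem ((mem_primitiveRoots hdpos).2 hζ)
      set P : R := ∏ μ ∈ (primitiveRoots d ℂ).attach,
          ((⟨μ.1, hμint μ.1 μ.2⟩ : R) - 1) with hP
      have hPdvd : P ∣ (nR - εR ^ d) ^ c := by
        rw [hc, ← Finset.card_attach]
        apply prod_dvd_pow_card'
        rintro ⟨μ, hμ⟩ -
        set μR : R := (⟨μ, hμint μ hμ⟩ : R) with hμR
        have hμp : IsPrimitiveRoot μ d := (mem_primitiveRoots hdpos).1 hμ
        haveI : NeZero d := ⟨hd0⟩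
        have h1 : nR - εR ^ d
            = (∏ k ∈ Finset.range d, Polynomial.aeval (zR ^ k) f)
              - ∏ _k ∈ Finset.range d, εR := by
          rw [hnR, Finset.prod_const, Finset.card_range]
        rw [h1]
        apply dvd_prod_sub_prod'
        intro k _
        have hpow : (ζ ^ k) ^ d = 1 := by
          rw [← pow_mul, mul_comm, pow_mul, hζ.pow_eq_one, one_pow]
        obtain ⟨m, -, hm⟩ := hμp.eq_pow_of_pow_eq_one hpow
        have hzk : zR ^ k = μR ^ m := by
          apply Subtype.ext
          push_cast [hzR, hμR]
          exact hm.symm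
        have hdvd1 : (μR - 1) ∣ zR ^ k - 1 := by
          rw [hzk]
          simpa using sub_dvd_pow_sub_pow μR 1 m
        have hdvd2 : (zR ^ k - 1) ∣ Polynomial.aeval (zR ^ k) f - εR := by
          have h := Polynomial.sub_dvd_eval_sub (zR ^ k) 1 (f.map (algebraMap ℤ R))
          rwa [Polynomial.eval_map, Polynomial.eval_map, Polynomial.eval₂_at_one,
            ← Polynomial.aeval_def] at h
        exact hdvd1.trans hdvd2
      -- the value of P in ℂ is ± p
      have hPval : algebraMap R ℂ P = (-1 : ℂ) ^ c * (p : ℂ) := by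
        have hco : ∀ μ ∈ (primitiveRoots d ℂ).attach,
            algebraMap R ℂ ((⟨μ.1, hμint μ.1 μ.2⟩ : R) - 1) = (-1) * (1 - μ.1) := by
          intro μ _
          rw [map_sub, map_one,
            show (algebraMap R ℂ) (⟨μ.1, hμint μ.1 μ.2⟩ : R) = μ.1 from rfl]
          ring
        rw [hP, map_prod, Finset.prod_congr rfl hco, Finset.prod_mul_distrib,
          Finset.prod_const, Finset.card_attach, ← hc]
        congr 1
        rw [Finset.prod_attach (primitiveRoots d ℂ) (fun μ => (1 : ℂ) - μ)]
        have step3 : Polynomial.eval 1 (Polynomial.cyclotomic d ℂ)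
            = ∏ μ ∈ primitiveRoots d ℂ, (1 - μ) := by
          rw [Polynomial.cyclotomic_eq_prod_X_sub_primitiveRoots hζ, Polynomial.eval_prod]
          simp
        rw [← step3, hd, Polynomial.eval_one_cyclotomic_prime_pow]
      -- transfer divisibility to ℤ
      obtain ⟨Y, hY⟩ := hPdvd
      have hYc : ((n : ℂ) - (ε : ℂ) ^ d) ^ c = ((-1 : ℂ) ^ c * (p : ℂ)) * (Y : ℂ) := by
        have := congrArg (algebraMap R ℂ) hY
        rw [map_mul, map_pow, map_sub, hcoe, map_pow, hPval] at this
        have hεcoe : algebraMap R ℂ εR = (ε : ℂ) := by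
          rw [hεR]; simp
        rw [hεcoe] at this
        exact this
      set m : ℤ := (n - ε ^ d) ^ c with hm
      set s : ℤ := (-1) ^ c * p with hs
      have hs0 : s ≠ 0 := by
        rw [hs]
        simp [hp.ne_zero]
      have hmY : (m : ℂ) = (s : ℂ) * (Y : ℂ) := by
        rw [hm, hs]
        push_cast
        exact hYc
      set q : ℚ := m / s with hq
      have hqY : algebraMap ℚ ℂ q = (Y : ℂ) := by
        rw [hq, map_div₀, map_intCast, map_intCast,
          div_eq_iff (by exact_mod_cast hs0 : ((s : ℤ) : ℂ) ≠ 0), hmY]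
        ring
      have hqint : IsIntegral ℤ q := by
        have h1 : IsIntegral ℤ (algebraMap ℚ ℂ q) := hqY ▸ Y.2
        exact (isIntegral_algebraMap_iff (algebraMap ℚ ℂ).injective).1 h1
      obtain ⟨z, hz⟩ := IsIntegrallyClosed.isIntegral_iff.1 hqint
      have hmsz : m = s * z := by
        have hq2 : (m : ℚ) = (s : ℚ) * (z : ℚ) := by
          rw [show ((z : ℚ)) = q from hz, hq,
            mul_div_cancel₀ _ (by exact_mod_cast hs0 : (s : ℚ) ≠ 0)]
        exact_mod_cast hq2
      have hpm : (p : ℤ) ∣ m := ⟨(-1) ^ c * z, by rw [hmsz, hs]; ring⟩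
      have hpsub : (p : ℤ) ∣ n - ε ^ d := hpZ.dvd_of_dvd_pow (hm ▸ hpm)
      intro hdvd
      have hpε : (p : ℤ) ∣ ε ^ d := by
        have := dvd_sub hdvd hpsub
        simpa using this
      exact hpZ.not_unit (isUnit_of_dvd_unit hpε (hεunit.pow d))
  refine ⟨fun h0 => hnd ?_, hnd⟩
  rw [h0]
  exact dvd_zero _
end

section
/- Let A be the 2×2 integer matrix with rows (-1, 1) and (0, -1) (a Seifert matrix of the trefoil knot). For a real number t with 0 < t < 1, let ω = e^{2πit} and let M(t) = (1 - ω)·A + (1 - \bar{ω})·Aᵀ, regarded as a 2×2 complex matrix (which is Hermitian). Then M(t) is negative definite if and only if 1/6 < t < 5/6. -/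
open Matrix
open scoped ComplexOrder

section LTaux
open Real
lemma cos_lt_half_iff (t : ℝ) (h0 : 0 < t) (h1 : t < 1) :
    Real.cos (2*Real.pi*t) < 1/2 ↔ 1/6 < t ∧ t < 5/6 := by
  have hpi := Real.pi_pos
  constructor
  · intro hc
    constructor
    · by_contra h
      push_neg at h
      have : Real.cos (π/3) ≤ Real.cos (2*π*t) := by
        apply Real.cos_le_cos_of_nonneg_of_le_pi (by nlinarith) (by nlinarith) (by nlinarith)
      rw [Real.cos_pi_div_three] at this
      linarith
    · by_contra h
      push_neg at h
      have he : Real.cos (2*π*t) = Real.cos (2*π - 2*π*t) := (Real.cos_two_pi_sub _).symm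
      have : Real.cos (π/3) ≤ Real.cos (2*π - 2*π*t) := by
        apply Real.cos_le_cos_of_nonneg_of_le_pi (by nlinarith) (by nlinarith) (by nlinarith)
      rw [Real.cos_pi_div_three] at this
      linarith [he ▸ this]
  · rintro ⟨h6, h56⟩
    by_cases hhalf : t ≤ 1/2
    · have : Real.cos (2*π*t) < Real.cos (π/3) := by
        apply Real.cos_lt_cos_of_nonneg_of_le_pi (by nlinarith) (by nlinarith) (by nlinarith)
      rwa [Real.cos_pi_div_three] at this
    · push_neg at hhalf
      have he : Real.cos (2*π*t) = Real.cos (2*π - 2*π*t) := (Real.cos_two_pi_sub _).symm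
      have : Real.cos (2*π - 2*π*t) < Real.cos (π/3) := by
        apply Real.cos_lt_cos_of_nonneg_of_le_pi (by nlinarith) (by nlinarith) (by nlinarith)
      rw [Real.cos_pi_div_three] at this
      linarith [he ▸ this]

lemma quad_pos (a b ur ui vr vi : ℝ) (hab : a^2+b^2 = 1) (h : a < 1/2)
    (hs : 0 < ur^2+ui^2+(vr^2+vi^2)) :
    0 < (2-2*a)*(ur^2+ui^2+(vr^2+vi^2)) + 2*((a-1)*(ur*vr+ui*vi) - b*(ur*vi-ui*vr)) := by
  have hc : (0:ℝ) < 2-2*a := by linarith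
  have hc1 : (0:ℝ) < 1-2*a := by linarith
  have hid : 2*(2-2*a)*((2-2*a)*(ur^2+ui^2+(vr^2+vi^2))
        + 2*((a-1)*(ur*vr+ui*vi) - b*(ur*vi-ui*vr)))
      = ((2-2*a)*ur+(a-1)*vr-b*vi)^2 + ((2-2*a)*ui+(a-1)*vi+b*vr)^2
        + ((2-2*a)*vr+(a-1)*ur+b*ui)^2 + ((2-2*a)*vi+(a-1)*ui-b*ur)^2
        + ((2-2*a)*((2-2*a)-1) - (a^2+b^2-1))*(ur^2+ui^2+(vr^2+vi^2)) := by ring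
  have h2 : (0:ℝ) < 2*(2-2*a)*((2-2*a)*(ur^2+ui^2+(vr^2+vi^2))
      + 2*((a-1)*(ur*vr+ui*vi) - b*(ur*vi-ui*vr))) := by
    rw [hid, hab]
    have hpos : (0:ℝ) < ((2-2*a)*((2-2*a)-1) - (1-1))*(ur^2+ui^2+(vr^2+vi^2)) := by
      have : (0:ℝ) < (2-2*a)*((2-2*a)-1) - (1-1) := by nlinarith
      exact mul_pos this hs
    nlinarith [sq_nonneg ((2-2*a)*ur+(a-1)*vr-b*vi), sq_nonneg ((2-2*a)*ui+(a-1)*vi+b*vr),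
      sq_nonneg ((2-2*a)*vr+(a-1)*ur+b*ui), sq_nonneg ((2-2*a)*vi+(a-1)*ui-b*ur)]
  nlinarith [h2, hc]

/-- For the trefoil Seifert matrix `A = [[-1,1],[0,-1]]` and `0 < t < 1`,
the Levine–Tristram form `M(t) = (1-ω)A + (1-ω̄)Aᵀ` with `ω = e^{2πit}` is
negative definite iff `1/6 < t < 5/6`. -/
theorem stmt_6 (t : ℝ) (ht : 0 < t ∧ t < 1)
    (A : Matrix (Fin 2) (Fin 2) ℂ) (hA : A = !![-1, 1; 0, -1])
    (ω : ℂ) (hω : ω = Complex.exp (2 * Real.pi * Complex.I * t))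
    (M : Matrix (Fin 2) (Fin 2) ℂ)
    (hM : M = (1 - ω) • A + (1 - starRingEnd ℂ ω) • Aᵀ) :
    (-M).PosDef ↔ (1 / 6 : ℝ) < t ∧ t < 5 / 6 := by
  obtain ⟨ht0, ht1⟩ := ht
  set a : ℝ := Real.cos (2 * Real.pi * t) with ha
  set b : ℝ := Real.sin (2 * Real.pi * t) with hb
  have hωab : ω = (a : ℂ) + (b : ℂ) * Complex.I := by
    rw [hω, show (2 * (Real.pi:ℂ) * Complex.I * (t:ℂ)) = ((2*Real.pi*t : ℝ) : ℂ) * Complex.I by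
      push_cast; ring, Complex.exp_mul_I]
    rw [ha, hb]
    push_cast
    ring_nf
  have hconj : starRingEnd ℂ ω = (a : ℂ) - (b : ℂ) * Complex.I := by
    rw [hωab]; simp [Complex.conj_ofReal]; ring
  have hab : a^2 + b^2 = 1 := by
    rw [ha, hb]; nlinarith [Real.sin_sq_add_cos_sq (2*Real.pi*t)]
  have hMneg : -M = !![((2 - 2*a : ℝ):ℂ), ω - 1; starRingEnd ℂ ω - 1, ((2 - 2*a : ℝ):ℂ)] := by
    rw [hM, hA]
    ext i j
    fin_cases i <;> fin_cases j <;>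
      simp [hωab, hconj, Matrix.transpose_apply, Matrix.smul_apply, smul_eq_mul, Matrix.smul_cons, Matrix.smul_empty, Matrix.vecHead, Matrix.vecTail, Pi.smul_apply] <;> push_cast <;> ring
  have habC : ((a:ℂ))^2 + ((b:ℂ))^2 = 1 := by exact_mod_cast hab
  have key : (-M).PosDef ↔ a < 1/2 := by
    constructor
    · intro h
      have h1 : (0:ℂ) < star (![1,0] : Fin 2 → ℂ) ⬝ᵥ ((-M) *ᵥ ![1,0]) := by
        apply h.dotProduct_mulVec_pos
        intro hcon
        have := congrFun hcon 0
        simp at this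
      rw [hMneg] at h1
      have h1' : (0:ℝ) < 2 - 2*a := by
        rw [← Complex.zero_lt_real]
        convert h1 using 1
        simp [Matrix.mulVec, dotProduct, Fin.sum_univ_two]
      have hdp := h.det_pos
      have hdet : (-M).det = (((2-2*a)^2 - (2-2*a) : ℝ) : ℂ) := by
        rw [hMneg, Matrix.det_fin_two_of, hconj, hωab]
        push_cast
        linear_combination (-1:ℂ) * habC + ((b:ℂ))^2 * Complex.I_sq
      rw [hdet, Complex.zero_lt_real] at hdp
      nlinarith
    · intro h
      refine Matrix.PosDef.of_dotProduct_mulVec_pos ?_ ?_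
      · rw [Matrix.IsHermitian, hMneg]
        ext i j
        fin_cases i <;> fin_cases j <;>
          simp [Matrix.conjTranspose_apply, hωab, hconj, Complex.conj_ofReal]
      · intro x hx
        have hx' : (0:ℝ) < ((x 0).re^2 + (x 0).im^2) + ((x 1).re^2 + (x 1).im^2) := by
          have hor : x 0 ≠ 0 ∨ x 1 ≠ 0 := by
            by_contra hcon
            push_neg at hcon
            apply hx
            funext i
            fin_cases i
            · exact hcon.1
            · exact hcon.2
          rcases hor with h0 | h0 <;>
            · rw [← Complex.normSq_pos, Complex.normSq_apply] at h0
              nlinarith [sq_nonneg (x 0).re, sq_nonneg (x 0).im, sq_nonneg (x 1).re,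
                sq_nonneg (x 1).im]
        rw [Complex.lt_def]
        rw [hMneg]
        simp only [Matrix.mulVec, dotProduct, Fin.sum_univ_two, hωab, hconj,
          Matrix.cons_val', Matrix.cons_val_zero, Matrix.cons_val_one, Matrix.head_cons,
          Matrix.head_fin_const, Matrix.empty_val', Matrix.cons_val_fin_one, Matrix.of_apply,
          Pi.star_apply, RCLike.star_def, Complex.add_re, Complex.add_im, Complex.mul_re,
          Complex.mul_im, Complex.sub_re, Complex.sub_im, Complex.ofReal_re, Complex.ofReal_im,
          Complex.I_re, Complex.I_im, Complex.one_re, Complex.one_im, Complex.conj_re,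
          Complex.conj_im, Complex.zero_re, Complex.zero_im]
        have hq := quad_pos a b (x 0).re (x 0).im (x 1).re (x 1).im hab h (by linarith)
        constructor
        · linarith [hq]
        · ring
  rw [key, ha]
  exact cos_lt_half_iff t ht0 ht1

end LTaux
end

section
/- Let A be the 2×2 integer matrix with rows (-1, 1) and (0, -1) (a Seifert matrix of the trefoil knot). For a real number t with 0 < t < 1/6 or 5/6 < t < 1, let ω = e^{2πit} and M(t) = (1 - ω)·A + (1 - \bar{ω})·Aᵀ. Then the determinant of M(t) is a real number that is strictly negative; consequently M(t) is neither positive semidefinite nor negative semidefinite. -/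
open Matrix
open scoped ComplexOrder

/-- For the trefoil Seifert matrix `A = [[-1,1],[0,-1]]` and `0 < t < 1/6` or
`5/6 < t < 1`, the Levine–Tristram form `M(t) = (1-ω)A + (1-ω̄)Aᵀ`, `ω = e^{2πit}`,
has real strictly negative determinant; consequently `M(t)` is neither positive
semidefinite nor negative semidefinite. -/
theorem stmt_7 (t : ℝ) (ht : (0 < t ∧ t < 1 / 6) ∨ (5 / 6 < t ∧ t < 1))
    (A : Matrix (Fin 2) (Fin 2) ℂ) (hA : A = !![-1, 1; 0, -1])
    (ω : ℂ) (hω : ω = Complex.exp (2 * Real.pi * Complex.I * t))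
    (M : Matrix (Fin 2) (Fin 2) ℂ)
    (hM : M = (1 - ω) • A + (1 - starRingEnd ℂ ω) • Aᵀ) :
    (∃ r : ℝ, M.det = (r : ℂ) ∧ r < 0) ∧ ¬ M.PosSemidef ∧ ¬ (-M).PosSemidef := by
  set θ : ℝ := 2 * Real.pi * t with hθ
  have hωexp : ω = Complex.exp ((θ : ℂ) * Complex.I) := by
    have harg : ((θ : ℝ) : ℂ) * Complex.I = 2 * Real.pi * Complex.I * t := by
      rw [hθ]; push_cast; ring
    rw [hω, harg]
  -- ω has modulus 1
  have hmul : ω * starRingEnd ℂ ω = 1 := by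
    rw [hωexp, Complex.mul_conj]
    norm_cast
    simp [Complex.normSq_eq_norm_sq, Complex.norm_exp]
  -- ω + ω̄ = 2 cos θ
  have hadd : ω + starRingEnd ℂ ω = 2 * (Real.cos θ : ℂ) := by
    rw [hωexp, Complex.add_conj]
    rw [show ((θ : ℂ) * Complex.I) = (θ : ℝ) * Complex.I from rfl]
    norm_cast
    simp [Complex.exp_ofReal_mul_I_re]
  -- cos θ ∈ (1/2, 1)
  have hπ := Real.pi_pos
  have hcos : 1 / 2 < Real.cos θ ∧ Real.cos θ < 1 := by
    rcases ht with ⟨h0, h1⟩ | ⟨h0, h1⟩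
    · have hθ0 : 0 < θ := by positivity
      have hθ1 : θ < Real.pi / 3 := by rw [hθ]; nlinarith
      constructor
      · have := Real.cos_lt_cos_of_nonneg_of_le_pi (le_of_lt hθ0)
          (by linarith) hθ1
        rw [Real.cos_pi_div_three] at this; linarith
      · have := Real.cos_lt_cos_of_nonneg_of_le_pi (le_refl 0)
          (by linarith) hθ0
        rw [Real.cos_zero] at this; linarith
    · have hc : Real.cos θ = Real.cos (2 * Real.pi - θ) := by
        rw [Real.cos_sub]; simp
      set φ := 2 * Real.pi - θ with hφ
      have hφ0 : 0 < φ := by rw [hφ, hθ]; nlinarith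
      have hφ1 : φ < Real.pi / 3 := by rw [hφ, hθ]; nlinarith
      rw [hc]
      constructor
      · have := Real.cos_lt_cos_of_nonneg_of_le_pi (le_of_lt hφ0)
          (by linarith) hφ1
        rw [Real.cos_pi_div_three] at this; linarith
      · have := Real.cos_lt_cos_of_nonneg_of_le_pi (le_refl 0)
          (by linarith) hφ0
        rw [Real.cos_zero] at this; linarith
  set c : ℝ := Real.cos θ with hc
  set s : ℝ := 2 - 2 * c with hs
  have hs0 : 0 < s := by rw [hs]; linarith [hcos.2]
  have hs1 : s < 1 := by rw [hs]; linarith [hcos.1]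
  have hsum : ω + starRingEnd ℂ ω = 2 - (s : ℂ) := by
    rw [hadd]; push_cast [hs]; ring
  -- (1-ω)(1-ω̄) = s
  have hkey : (1 - ω) * (1 - starRingEnd ℂ ω) = (s : ℝ) := by
    have : (1 - ω) * (1 - starRingEnd ℂ ω)
        = 1 - (ω + starRingEnd ℂ ω) + ω * starRingEnd ℂ ω := by ring
    rw [this, hmul, hsum]; ring
  have hsc : (s : ℂ) = 2 - 2 * (c : ℂ) := by rw [hs]; push_cast; ring
  -- the matrix explicitly
  have hAT : Aᵀ = !![(-1 : ℂ), 0; 1, -1] := by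
    rw [hA]; ext i j; fin_cases i <;> fin_cases j <;> rfl
  have hMval : M = !![((-s : ℝ) : ℂ), 1 - ω; 1 - starRingEnd ℂ ω, ((-s : ℝ) : ℂ)] := by
    rw [hM, hAT, hA]
    ext i j
    fin_cases i <;> fin_cases j <;>
      simp [Matrix.add_apply, smul_eq_mul]
    all_goals linear_combination hadd + hsc
  have hM00 : M 0 0 = ((-s : ℝ) : ℂ) := by rw [hMval]; simp
  have hM11 : M 1 1 = ((-s : ℝ) : ℂ) := by rw [hMval]; simp
  have hM01 : M 0 1 = 1 - ω := by rw [hMval]; simp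
  have hM10 : M 1 0 = 1 - starRingEnd ℂ ω := by rw [hMval]; simp
  -- determinant
  have hdet : M.det = ((s ^ 2 - s : ℝ) : ℂ) := by
    rw [Matrix.det_fin_two, hM00, hM11, hM01, hM10]
    push_cast
    linear_combination -hkey
  refine ⟨⟨s ^ 2 - s, hdet, by nlinarith⟩, ?_, ?_⟩
  · rw [Matrix.posSemidef_iff_dotProduct_mulVec]; rintro ⟨_, hpos⟩
    have h := hpos ![1, 0]
    have heq : star ![(1:ℂ), 0] ⬝ᵥ (M *ᵥ ![1, 0]) = M 0 0 := by
      simp [dotProduct, Matrix.mulVec, Fin.sum_univ_two]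
    rw [heq, hM00] at h
    rw [Complex.zero_le_real] at h
    linarith
  · rw [Matrix.posSemidef_iff_dotProduct_mulVec]; rintro ⟨_, hpos⟩
    have h := hpos ![1 - ω, 1]
    have heq : star ![1 - ω, (1:ℂ)] ⬝ᵥ ((-M) *ᵥ ![1 - ω, 1])
        = ((s ^ 2 - s : ℝ) : ℂ) := by
      simp [dotProduct, Matrix.mulVec, Fin.sum_univ_two, hMval, map_sub, _root_.map_one]
      linear_combination ((s:ℂ) - 2) * hkey
    rw [heq, Complex.zero_le_real] at h
    nlinarith
end
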